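/- arXiv:2211.00287 — 2 statements merged into one kernel-verified Lean document; each statement's English description precedes it below -/
import Mathlib

section
/- Let λ > 0 and let f : ℝ → ℝ be continuously differentiable with liminf_{|u|→∞} f'(u) > −λ. Define F(u) = ∫₀ᵘ f(τ) dτ. Then there exist constants μ ∈ [0, λ) and C ≥ 0 such that F(u) ≥ −(μ/2)u² − C for all u ∈ ℝ. -/
set_option maxHeartbeats 800000
open Filter intervalIntegral


/-- Inequality (3.4) of the paper (pointwise form): if `liminf_{|u|→∞} f'(u) > -λ`
and `F(u) = ∫₀ᵘ f`, then `F(u) ≥ -(μ/2)u² - C` for some `μ ∈ [0, λ)` and `C ≥ 0`. -/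
theorem primitive_lower_bound_of_liminf_deriv
    (lam : ℝ) (hlam : 0 < lam) (f : ℝ → ℝ) (hf : ContDiff ℝ 1 f)
    (hliminf : ((-lam : ℝ) : EReal) <
      Filter.liminf (fun u : ℝ => ((deriv f u : ℝ) : EReal)) (Filter.cocompact ℝ)) :
    ∃ μ C : ℝ, 0 ≤ μ ∧ μ < lam ∧ 0 ≤ C ∧
      ∀ u : ℝ, (∫ τ in (0:ℝ)..u, f τ) ≥ -(μ / 2) * u ^ 2 - C := by
  have hfc : Continuous f := hf.continuous
  have hf'c : Continuous (deriv f) := hf.continuous_deriv le_rfl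
  have hdiff : Differentiable ℝ f := hf.differentiable one_ne_zero
  obtain ⟨z, hz1, hz2⟩ := EReal.exists_between_coe_real hliminf
  have hz1' : -lam < z := by exact_mod_cast hz1
  have hev : ∀ᶠ u in cocompact ℝ, (z : EReal) < (deriv f u : ℝ) :=
    eventually_lt_of_lt_liminf hz2
  obtain ⟨t, htc, hts⟩ := Filter.mem_cocompact.mp hev
  obtain ⟨r, hr⟩ := htc.isBounded.subset_closedBall 0
  set R : ℝ := max r 0 + 1 with hR
  have hR0 : 0 < R := by positivity
  set μ₀ : ℝ := max (-z) 0 with hμ₀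
  have hμ₀0 : 0 ≤ μ₀ := le_max_right _ _
  have hμ₀lam : μ₀ < lam := max_lt (by linarith) hlam
  have hkey : ∀ u : ℝ, R ≤ |u| → -μ₀ ≤ deriv f u := by
    intro u hu
    have hnot : u ∉ Metric.closedBall (0:ℝ) r := by
      simp only [Metric.mem_closedBall, Real.dist_eq, sub_zero]
      intro h
      have : r ≤ max r 0 := le_max_left _ _
      linarith
    have : u ∈ tᶜ := fun h => hnot (hr h)
    have hz : (z : EReal) < (deriv f u : ℝ) := hts this
    have hlt : z < deriv f u := by exact_mod_cast hz
    have : -μ₀ ≤ z := by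
      rw [hμ₀]
      rcases le_total (-z) 0 with h | h
      · simp [max_eq_right h]; linarith
      · simp [max_eq_left h]
    linarith
  set δ : ℝ := (lam - μ₀) / 2 with hδ
  have hδ0 : 0 < δ := by rw [hδ]; linarith
  set μ : ℝ := μ₀ + δ with hμdef
  have hμ0 : 0 ≤ μ := by positivity
  have hμlam : μ < lam := by rw [hμdef, hδ]; linarith
  have hup : ∀ τ : ℝ, R ≤ τ → f R - μ₀ * τ ≤ f τ := by
    intro τ hτ
    have hftc : ∫ y in R..τ, deriv f y = f τ - f R :=
      integral_deriv_eq_sub (fun x _ => hdiff x) (hf'c.intervalIntegrable _ _)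
    have hmono : ∫ y in R..τ, (-μ₀ : ℝ) ≤ ∫ y in R..τ, deriv f y := by
      apply integral_mono_on hτ (intervalIntegrable_const) (hf'c.intervalIntegrable _ _)
      intro x hx
      exact hkey x (by rw [abs_of_nonneg (by linarith [hx.1])]; linarith [hx.1])
    rw [integral_const, smul_eq_mul, hftc] at hmono
    nlinarith
  have hdown : ∀ τ : ℝ, τ ≤ -R → f τ ≤ f (-R) - μ₀ * τ := by
    intro τ hτ
    have hftc : ∫ y in τ..(-R), deriv f y = f (-R) - f τ :=
      integral_deriv_eq_sub (fun x _ => hdiff x) (hf'c.intervalIntegrable _ _)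
    have hmono : ∫ y in τ..(-R), (-μ₀ : ℝ) ≤ ∫ y in τ..(-R), deriv f y := by
      apply integral_mono_on hτ (intervalIntegrable_const) (hf'c.intervalIntegrable _ _)
      intro x hx
      exact hkey x (by rw [abs_of_nonpos (by linarith [hx.2])]; linarith [hx.2])
    rw [integral_const, smul_eq_mul, hftc] at hmono
    nlinarith
  set F : ℝ → ℝ := fun u => ∫ τ in (0:ℝ)..u, f τ with hF
  have hFeq : ∀ v : ℝ, F v = ∫ τ in (0:ℝ)..v, f τ := fun v => rfl
  have hFc : Continuous F := continuous_primitive (fun a b => hfc.intervalIntegrable a b) 0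
  obtain ⟨M, hM⟩ := (isCompact_Icc (a := -R) (b := R)).exists_bound_of_continuousOn
    hFc.continuousOn
  have hM0 : ∀ x ∈ Set.Icc (-R) R, |F x| ≤ M := by
    intro x hx; simpa using hM x hx
  have hMnn : 0 ≤ M := le_trans (abs_nonneg _) (hM0 0 (by constructor <;> linarith))
  set B : ℝ := max |f R| |f (-R)| with hB
  have hBnn : 0 ≤ B := le_trans (abs_nonneg _) (le_max_left _ _)
  clear_value R μ₀ δ μ F B
  clear hr hts hev hz2 hz1 htc hliminf
  refine ⟨μ, M + B ^ 2 / (2 * δ), hμ0, hμlam, by positivity, ?_⟩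
  intro u
  have hAbsorb : B * |u| ≤ δ / 2 * u ^ 2 + B ^ 2 / (2 * δ) := by
    have h2 : B * |u| ≤ (δ ^ 2 * u ^ 2 + B ^ 2) / (2 * δ) := by
      rw [le_div_iff₀ (by positivity)]
      nlinarith [sq_nonneg (δ * |u| - B), sq_abs u]
    have h3 : (δ ^ 2 * u ^ 2 + B ^ 2) / (2 * δ) = δ / 2 * u ^ 2 + B ^ 2 / (2 * δ) := by
      field_simp
    linarith [h3 ▸ h2]
  have hμexp : μ / 2 * u ^ 2 = μ₀ / 2 * u ^ 2 + δ / 2 * u ^ 2 := by rw [hμdef]; ring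
  have hμ₀R : (0:ℝ) ≤ μ₀ * (R ^ 2 / 2) := by positivity
  rcases le_total u R with hu1 | hu1
  · rcases le_total (-R) u with hu2 | hu2
    · -- |u| ≤ R
      have h1 : -M ≤ F u := by
        have := abs_le.mp (hM0 u ⟨hu2, hu1⟩); linarith [this.1]
      have h2 : (0:ℝ) ≤ μ / 2 * u ^ 2 := by positivity
      have h3 : (0:ℝ) ≤ B ^ 2 / (2 * δ) := by positivity
      rw [← hFeq u]
      linarith
    · -- u ≤ -R
      have hsplit : F (-R) + ∫ τ in (-R)..u, f τ = F u := by
        rw [hFeq, hFeq]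
        exact integral_add_adjacent_intervals (hfc.intervalIntegrable _ _) (hfc.intervalIntegrable _ _)
      have hbound : ∫ τ in u..(-R), f τ ≤ ∫ τ in u..(-R), (f (-R) - μ₀ * τ) := by
        apply integral_mono_on hu2 (hfc.intervalIntegrable _ _)
          ((continuous_const.sub (continuous_mul_left μ₀)).intervalIntegrable _ _)
        intro x hx
        exact hdown x hx.2
      have hcomp : ∫ τ in u..(-R), (f (-R) - μ₀ * τ) =
          f (-R) * (-R - u) - μ₀ * ((-R) ^ 2 / 2 - u ^ 2 / 2) := by
        rw [integral_sub (intervalIntegrable_const)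
            (((continuous_mul_left μ₀)).intervalIntegrable _ _),
          integral_const, integral_const_mul, integral_id, smul_eq_mul]
        ring
      have hrev : ∫ τ in (-R)..u, f τ = -∫ τ in u..(-R), f τ := integral_symm u (-R)
      have hFneg : -M ≤ F (-R) := by
        have := abs_le.mp (hM0 (-R) ⟨le_refl _, by linarith⟩); linarith [this.1]
      have hBf1 : -B ≤ f (-R) := by
        linarith [neg_abs_le (f (-R)), le_max_right |f R| |f (-R)|]
      have hBf2 : f (-R) ≤ B := by
        linarith [le_abs_self (f (-R)), le_max_right |f R| |f (-R)|]
      have habs : |u| = -u := abs_of_nonpos (by linarith)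
      have key : f (-R) * (-R - u) ≤ B * |u| := by
        rw [habs]
        nlinarith [mul_nonneg (by linarith : (0:ℝ) ≤ B - f (-R)) (by linarith : (0:ℝ) ≤ -R - u),
          mul_nonneg hBnn hR0.le]
      rw [← hFeq u, ← hsplit, hrev]
      rw [hcomp] at hbound
      have hRsq : (-R) ^ 2 = R ^ 2 := by ring
      rw [hRsq] at hbound
      -- F(-R) - ∫_u^{-R} f ≥ -M - B|u| - μ₀/2 u² + μ₀ R²/2 ≥ goal
      have hμu : μ₀ * (R ^ 2 / 2 - u ^ 2 / 2) = μ₀ * (R ^ 2 / 2) - μ₀ / 2 * u ^ 2 := by ring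
      rw [hμu] at hbound
      linarith
  · -- R ≤ u
    have hsplit : F R + ∫ τ in R..u, f τ = F u := by
      rw [hFeq, hFeq]
      exact integral_add_adjacent_intervals (hfc.intervalIntegrable _ _) (hfc.intervalIntegrable _ _)
    have hbound : ∫ τ in R..u, (f R - μ₀ * τ) ≤ ∫ τ in R..u, f τ := by
      apply integral_mono_on hu1
        ((continuous_const.sub (continuous_mul_left μ₀)).intervalIntegrable _ _)
        (hfc.intervalIntegrable _ _)
      intro x hx
      exact hup x hx.1
    have hcomp : ∫ τ in R..u, (f R - μ₀ * τ) =
        f R * (u - R) - μ₀ * (u ^ 2 / 2 - R ^ 2 / 2) := by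
      rw [integral_sub (intervalIntegrable_const)
          (((continuous_mul_left μ₀)).intervalIntegrable _ _),
        integral_const, integral_const_mul, integral_id, smul_eq_mul]
      ring
    have hFpos : -M ≤ F R := by
      have := abs_le.mp (hM0 R ⟨by linarith, le_refl _⟩); linarith [this.1]
    have hBf1 : -B ≤ f R := by
      linarith [neg_abs_le (f R), le_max_left |f R| |f (-R)|]
    have hBf2 : f R ≤ B := by
      linarith [le_abs_self (f R), le_max_left |f R| |f (-R)|]
    have habs : |u| = u := abs_of_nonneg (by linarith)
    have key : -(B * |u|) ≤ f R * (u - R) := by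
      rw [habs]
      nlinarith [mul_nonneg (by linarith : (0:ℝ) ≤ f R + B) (by linarith : (0:ℝ) ≤ u - R),
        mul_nonneg hBnn hR0.le]
    rw [← hFeq u, ← hsplit]
    rw [hcomp] at hbound
    have hμu : μ₀ * (u ^ 2 / 2 - R ^ 2 / 2) = μ₀ / 2 * u ^ 2 - μ₀ * (R ^ 2 / 2) := by ring
    rw [hμu] at hbound
    linarith
end

section
/- Let λ > 0 and let f : ℝ → ℝ be continuously differentiable with liminf_{|u|→∞} f'(u) > −λ. Define F(u) = ∫₀ᵘ f(τ) dτ. Then there exist constants μ ∈ [0, λ) and C ≥ 0 such that f(u)·u ≥ F(u) − (μ/2)u² − C for all u ∈ ℝ. -/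
open Filter intervalIntegral in
/-- Inequality (3.5) of the paper (pointwise form): if `liminf_{|u|→∞} f'(u) > -λ`
and `F(u) = ∫₀ᵘ f`, then `f(u)·u ≥ F(u) - (μ/2)u² - C` for some `μ ∈ [0, λ)` and `C ≥ 0`. -/
theorem dissipativity_bound_of_liminf_deriv
    (lam : ℝ) (hlam : 0 < lam) (f : ℝ → ℝ) (hf : ContDiff ℝ 1 f)
    (hliminf : ((-lam : ℝ) : EReal) <
      Filter.liminf (fun u : ℝ => ((deriv f u : ℝ) : EReal)) (Filter.cocompact ℝ)) :
    ∃ μ C : ℝ, 0 ≤ μ ∧ μ < lam ∧ 0 ≤ C ∧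
      ∀ u : ℝ, f u * u ≥ (∫ τ in (0:ℝ)..u, f τ) - (μ / 2) * u ^ 2 - C := by
  -- pick c : ℝ with -lam < c < liminf
  obtain ⟨ce, hce1, hce2⟩ := exists_between hliminf
  have hceT : ce ≠ ⊤ := hce2.ne_top
  have hceB : ce ≠ ⊥ := by
    intro h; rw [h] at hce1; exact lt_asymm (EReal.bot_lt_coe _) hce1
  set c : ℝ := ce.toReal with hc
  have hcec : ce = (c : EReal) := (EReal.coe_toReal hceT hceB).symm
  have hclam : -lam < c := by
    rw [hcec] at hce1; exact_mod_cast hce1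
  set μ : ℝ := max 0 (-c) with hμ
  have hμ0 : 0 ≤ μ := le_max_left _ _
  have hμlam : μ < lam := max_lt hlam (by linarith)
  have hcμ : -μ ≤ c := by
    have : -c ≤ μ := le_max_right _ _
    linarith
  -- eventual bound on deriv f
  have hev : ∀ᶠ u in Filter.cocompact ℝ, (ce : EReal) < ((deriv f u : ℝ) : EReal) :=
    Filter.eventually_lt_of_lt_liminf hce2
  rw [cocompact_eq_atBot_atTop, Filter.eventually_sup] at hev
  obtain ⟨hbot, htop⟩ := hev
  rw [Filter.eventually_atBot] at hbot
  rw [Filter.eventually_atTop] at htop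
  obtain ⟨R₂, hR₂⟩ := hbot
  obtain ⟨R₁, hR₁⟩ := htop
  set R : ℝ := max 1 (max R₁ (-R₂)) with hR
  have hR0 : 0 < R := lt_of_lt_of_le one_pos (le_max_left _ _)
  have hderge : ∀ u, R ≤ u → -μ < deriv f u := by
    intro u hu
    have : (ce : EReal) < ((deriv f u : ℝ) : EReal) :=
      hR₁ u (le_trans (le_trans (le_max_left _ _) (le_max_right _ _)) hu)
    rw [hcec] at this
    have := EReal.coe_lt_coe_iff.mp this
    linarith [hcμ]
  have hderle : ∀ u, u ≤ -R → -μ < deriv f u := by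
    intro u hu
    have hRr : -R ≤ R₂ := by
      have : -R₂ ≤ R := le_trans (le_max_right _ _) (le_max_right _ _)
      linarith
    have : (ce : EReal) < ((deriv f u : ℝ) : EReal) := hR₂ u (le_trans hu hRr)
    rw [hcec] at this
    have := EReal.coe_lt_coe_iff.mp this
    linarith [hcμ]
  -- the auxiliary function g
  set g : ℝ → ℝ := fun u => f u * u + (μ / 2) * u ^ 2 - ∫ τ in (0:ℝ)..u, f τ with hg
  have hfc : Continuous f := hf.continuous
  have hfd : Differentiable ℝ f := hf.differentiable one_ne_zero
  have hgd : ∀ u : ℝ, HasDerivAt g ((deriv f u + μ) * u) u := by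
    intro u
    have h1 : HasDerivAt (fun u => f u * u) (deriv f u * u + f u * 1) u :=
      (hfd u).hasDerivAt.mul (hasDerivAt_id u)
    have h2 : HasDerivAt (fun u : ℝ => (μ / 2) * u ^ 2) ((μ / 2) * (2 * u ^ 1)) u :=
      (hasDerivAt_pow 2 u).const_mul (μ / 2)
    have h3 : HasDerivAt (fun u : ℝ => ∫ τ in (0:ℝ)..u, f τ) (f u) u := by
      exact intervalIntegral.integral_hasDerivAt_right
        (hfc.intervalIntegrable _ _)
        hfc.aestronglyMeasurable.stronglyMeasurableAtFilter
        hfc.continuousAt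
    have := (h1.add h2).sub h3
    exact this.congr_deriv (by ring)
  have hgc : Continuous g := by
    have : Continuous (fun u : ℝ => ∫ τ in (0:ℝ)..u, f τ) :=
      intervalIntegral.continuous_primitive (fun a b => hfc.intervalIntegrable a b) 0
    fun_prop
  have hgdiff : Differentiable ℝ g := fun u => (hgd u).differentiableAt
  -- g monotone on [R, ∞)
  have hmono : MonotoneOn g (Set.Ici R) := by
    apply monotoneOn_of_deriv_nonneg (convex_Ici R) hgc.continuousOn
      hgdiff.differentiableOn
    intro x hx
    rw [interior_Ici] at hx
    rw [(hgd x).deriv]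
    have h1 : -μ < deriv f x := hderge x (le_of_lt hx)
    have h2 : 0 < x := lt_trans hR0 hx
    nlinarith
  have hanti : AntitoneOn g (Set.Iic (-R)) := by
    apply antitoneOn_of_deriv_nonpos (convex_Iic (-R)) hgc.continuousOn
      hgdiff.differentiableOn
    intro x hx
    rw [interior_Iic] at hx
    rw [(hgd x).deriv]
    have h1 : -μ < deriv f x := hderle x (le_of_lt hx)
    have h2 : x < 0 := lt_trans hx (by linarith)
    nlinarith
  -- min on compact interval
  obtain ⟨x₀, hx₀, hmin⟩ := isCompact_Icc.exists_isMinOn (Set.nonempty_Icc.mpr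
    (by linarith : -R ≤ R)) hgc.continuousOn
  set C : ℝ := max 0 (-(g x₀)) with hC
  have hC0 : 0 ≤ C := le_max_left _ _
  have hCg : -C ≤ g x₀ := by
    have : -(g x₀) ≤ C := le_max_right _ _
    linarith
  refine ⟨μ, C, hμ0, hμlam, hC0, fun u => ?_⟩
  have key : -C ≤ g u := by
    rcases le_total u (-R) with h | h
    · have : g (-R) ≤ g u := hanti (Set.mem_Iic.mpr h) (Set.mem_Iic.mpr (le_refl _)) h
      have h2 : g x₀ ≤ g (-R) := hmin (Set.mem_Icc.mpr ⟨le_refl _, by linarith⟩)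
      linarith
    rcases le_total R u with h' | h'
    · have : g R ≤ g u := hmono (Set.mem_Ici.mpr (le_refl _)) (Set.mem_Ici.mpr h') h'
      have h2 : g x₀ ≤ g R := hmin (Set.mem_Icc.mpr ⟨by linarith, le_refl _⟩)
      linarith
    · have h2 : g x₀ ≤ g u := hmin (Set.mem_Icc.mpr ⟨h, h'⟩)
      linarith
  simp only [hg] at key
  linarith [key]
end
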